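/- For every nonnegative integer i, the diagonal case j = i of the Alladi–Gordon key identity holds: ∑_{k=0}^{i} (q^{i-k+1};q)_k [i choose k]_q q^{(i-k)^2} = 1 as polynomials in q. -/

import Mathlib

open Finset

/-- The variable `q`, as a rational function over `ℚ`. -/
noncomputable def q : RatFunc ℚ := RatFunc.X

/-- The q-shifted factorial `(a; q)_k = (1-a)(1-aq)⋯(1-aq^{k-1})`. -/
noncomputable def qPoch (a : RatFunc ℚ) (k : ℕ) : RatFunc ℚ :=
  ∏ s ∈ Finset.range k, (1 - a * q ^ s)

/-- The Gaussian (q-binomial) coefficient `[j choose k]_q = (q;q)_j / ((q;q)_k (q;q)_{j-k})`. -/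
noncomputable def qbinom (j k : ℕ) : RatFunc ℚ :=
  qPoch q j / (qPoch q k * qPoch q (j - k))

lemma one_sub_q_pow_ne (m : ℕ) : (1 : RatFunc ℚ) - q ^ (m + 1) ≠ 0 := by
  intro h
  have h1 : (q : RatFunc ℚ) ^ (m + 1) = 1 := by linear_combination -h
  have h2 : (algebraMap (Polynomial ℚ) (RatFunc ℚ)) (Polynomial.X ^ (m + 1)) =
      (algebraMap (Polynomial ℚ) (RatFunc ℚ)) 1 := by
    simpa [q, RatFunc.algebraMap_X, map_pow] using h1
  have h3 := RatFunc.algebraMap_injective (K := ℚ) h2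
  have := congrArg Polynomial.natDegree h3
  simp [Polynomial.natDegree_X_pow] at this

lemma qPoch_q_succ (n : ℕ) : qPoch q (n + 1) = qPoch q n * (1 - q ^ (n + 1)) := by
  rw [qPoch, Finset.prod_range_succ, ← qPoch, pow_succ, mul_comm (q ^ n) q]

lemma qPoch_ne (n : ℕ) : qPoch q n ≠ 0 := by
  induction n with
  | zero => simp [qPoch]
  | succ n ih => rw [qPoch_q_succ]; exact mul_ne_zero ih (one_sub_q_pow_ne n)

lemma q_ne : (q : RatFunc ℚ) ≠ 0 := RatFunc.X_ne_zero

lemma aux {K : Type*} [Field K] (qv a b A Pk Pm Pn : K) (ha : a ≠ 0) (hqv : qv ≠ 0)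
    (hPk : Pk ≠ 0) (hPm : Pm ≠ 0) (h2 : 1 - qv * b ≠ 0) (h3 : 1 - qv * a ≠ 0) :
    A * (Pn * (1 - qv * a * b)) ^ 2 / (Pk ^ 2 * (Pm * (1 - qv * b))) =
      A * Pn ^ 2 / (Pk ^ 2 * Pm) +
      (-(qv * a * b * (1 - qv * a) ^ 2 * (A * a ^ 2 * qv) * Pn ^ 2) /
          (qv * a * (Pk * (1 - qv * a)) ^ 2 * Pm) -
       -(qv * a * b * (1 - a) ^ 2 * A * Pn ^ 2) /
          (a * Pk ^ 2 * (Pm * (1 - qv * b)))) := by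
  set D : K := Pk ^ 2 * Pm * (1 - qv * a) ^ 2 * (1 - qv * b) with hDdef
  have hD : D ≠ 0 :=
    mul_ne_zero (mul_ne_zero (mul_ne_zero (pow_ne_zero _ hPk) hPm) (pow_ne_zero _ h3)) h2
  have e1 : A * (Pn * (1 - qv * a * b)) ^ 2 / (Pk ^ 2 * (Pm * (1 - qv * b))) =
      A * Pn ^ 2 * (1 - qv * a * b) ^ 2 * (1 - qv * a) ^ 2 / D := by
    rw [div_eq_div_iff (mul_ne_zero (pow_ne_zero _ hPk) (mul_ne_zero hPm h2)) hD]
    ring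
  have e2 : A * Pn ^ 2 / (Pk ^ 2 * Pm) =
      A * Pn ^ 2 * (1 - qv * a) ^ 2 * (1 - qv * b) / D := by
    rw [div_eq_div_iff (mul_ne_zero (pow_ne_zero _ hPk) hPm) hD]
    ring
  have e3 : -(qv * a * b * (1 - qv * a) ^ 2 * (A * a ^ 2 * qv) * Pn ^ 2) /
          (qv * a * (Pk * (1 - qv * a)) ^ 2 * Pm) =
      -(qv * a ^ 2 * b * A * Pn ^ 2 * (1 - qv * a) ^ 2 * (1 - qv * b)) / D := by
    rw [div_eq_div_iff (mul_ne_zero (mul_ne_zero (mul_ne_zero hqv ha)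
        (pow_ne_zero _ (mul_ne_zero hPk h3))) hPm) hD]
    ring
  have e4 : -(qv * a * b * (1 - a) ^ 2 * A * Pn ^ 2) / (a * Pk ^ 2 * (Pm * (1 - qv * b))) =
      -(qv * b * (1 - a) ^ 2 * A * Pn ^ 2 * (1 - qv * a) ^ 2) / D := by
    rw [div_eq_div_iff (mul_ne_zero (mul_ne_zero ha (pow_ne_zero _ hPk))
        (mul_ne_zero hPm h2)) hD]
    ring
  rw [e1, e2, e3, e4, div_sub_div_same, ← add_div, div_eq_div_iff hD hD]
  ring

/-- The summand after reversal: `F(n,k) = q^{k²} (q;q)_n² / ((q;q)_k² (q;q)_{n-k})`. -/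
noncomputable def E (n k : ℕ) : RatFunc ℚ :=
  q ^ (k ^ 2) * (qPoch q n) ^ 2 / ((qPoch q k) ^ 2 * qPoch q (n - k))

/-- The WZ certificate. -/
noncomputable def G (n k : ℕ) : RatFunc ℚ :=
  -(q ^ (n + 1) * (1 - q ^ k) ^ 2 * q ^ (k ^ 2) * (qPoch q n) ^ 2) /
    (q ^ k * (qPoch q k) ^ 2 * qPoch q (n + 1 - k))

lemma wz (n k : ℕ) (hk : k ≤ n) : E (n + 1) k = E n k + (G n (k + 1) - G n k) := by
  obtain ⟨m, rfl⟩ := Nat.exists_eq_add_of_le hk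
  have h1 : k + m + 1 - k = m + 1 := by omega
  have h3 : k + m + 1 - (k + 1) = m := by omega
  have h4 : (k + 1) ^ 2 = k ^ 2 + 2 * k + 1 := by ring
  rw [E, E, G, G, h1, Nat.add_sub_cancel_left, h3, h4,
    show k + m + 1 = (k + m) + 1 from rfl,
    qPoch_q_succ (k + m), qPoch_q_succ m, qPoch_q_succ k,
    show (q : RatFunc ℚ) ^ (k + m + 1) = q * q ^ k * q ^ m by ring,
    show (q : RatFunc ℚ) ^ (m + 1) = q * q ^ m by ring,
    show (q : RatFunc ℚ) ^ (k + 1) = q * q ^ k by ring,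
    show (q : RatFunc ℚ) ^ (k ^ 2 + 2 * k + 1) = q ^ (k ^ 2) * (q ^ k) ^ 2 * q by ring]
  exact aux q (q ^ k) (q ^ m) (q ^ (k ^ 2)) (qPoch q k) (qPoch q m) (qPoch q (k + m))
    (pow_ne_zero _ q_ne) q_ne (qPoch_ne k) (qPoch_ne m)
    (by simpa [pow_succ, mul_comm] using one_sub_q_pow_ne m)
    (by simpa [pow_succ, mul_comm] using one_sub_q_pow_ne k)

lemma G_zero (n : ℕ) : G n 0 = 0 := by
  simp [G]

lemma G_top (n : ℕ) : G n (n + 1) = -q ^ ((n + 1) ^ 2) := by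
  rw [G, Nat.sub_self, qPoch_q_succ n]
  have h1 := qPoch_ne n
  have h2 := one_sub_q_pow_ne n
  have h3 : (q : RatFunc ℚ) ^ (n + 1) ≠ 0 := pow_ne_zero _ q_ne
  rw [show qPoch q 0 = 1 from by simp [qPoch], mul_one]
  field_simp

lemma E_top (n : ℕ) : E (n + 1) (n + 1) = q ^ ((n + 1) ^ 2) := by
  rw [E, Nat.sub_self, show qPoch q 0 = 1 from by simp [qPoch], mul_one,
    mul_div_assoc, div_self (pow_ne_zero _ (qPoch_ne (n + 1))), mul_one]

lemma key (n : ℕ) : ∑ k ∈ Finset.range (n + 1), E n k = 1 := by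
  induction n with
  | zero => simp [E, qPoch]
  | succ n ih =>
    rw [Finset.sum_range_succ,
      Finset.sum_congr rfl (fun k hk => wz n k (by simpa using Nat.lt_succ_iff.mp (Finset.mem_range.mp hk))),
      Finset.sum_add_distrib, ih, Finset.sum_range_sub (G n), G_zero, G_top, E_top]
    ring

/-- The diagonal case `j = i` of the Alladi–Gordon key identity:
`∑_{k=0}^{i} (q^{i-k+1};q)_k [i choose k]_q q^{(i-k)^2} = 1`. -/
theorem alladi_gordon_diagonal (i : ℕ) :
    ∑ k ∈ Finset.range (i + 1),
      qPoch (q ^ (i - k + 1)) k * qbinom i k * q ^ ((i - k) ^ 2) = 1 := by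
  have hterm : ∀ k, k ≤ i →
      qPoch (q ^ (i - k + 1)) k * qbinom i k * q ^ ((i - k) ^ 2) = E i (i - k) := by
    intro k hk
    obtain ⟨m, rfl⟩ : ∃ m, i = m + k := ⟨i - k, by omega⟩
    have hmk : m + k - k = m := by omega
    have hsplit : qPoch q (m + k) = qPoch q m * qPoch (q ^ (m + 1)) k := by
      rw [qPoch, qPoch, qPoch, Finset.prod_range_add]
      refine congrArg _ (Finset.prod_congr rfl fun s _ => ?_)
      rw [show (q : RatFunc ℚ) * q ^ (m + s) = q ^ (m + 1) * q ^ s by ring]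
    have h2 : m + k - m = k := by omega
    rw [hmk, E, h2, qbinom, hmk, hsplit]
    have hP1 := qPoch_ne m
    have hP2 := qPoch_ne k
    have hP3 : qPoch (q ^ (m + 1)) k ≠ 0 := by
      intro h
      exact qPoch_ne (m + k) (by rw [hsplit, h, mul_zero])
    field_simp
  calc ∑ k ∈ Finset.range (i + 1),
        qPoch (q ^ (i - k + 1)) k * qbinom i k * q ^ ((i - k) ^ 2)
      = ∑ k ∈ Finset.range (i + 1), E i (i - k) := by
        refine Finset.sum_congr rfl fun k hk => hterm k ?_
        exact Nat.lt_succ_iff.mp (Finset.mem_range.mp hk)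
    _ = ∑ k ∈ Finset.range (i + 1), E i k := by
        simpa using Finset.sum_range_reflect (E i) (i + 1)
    _ = 1 := key i
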